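/- Combinatorial characterization of codimension-one cosystoles of pseudomanifolds: Let n ≥ 2 and let X be an n-pseudomanifold with H^{n−1}(X; Z/2) = 0. Then an (n−1)-cochain φ of X over Z/2 satisfies ‖φ‖ = ‖φ‖_csy (i.e., φ is a cosystole) if and only if 2·|E(C) ∩ E_φ| ≤ |E(C)| holds for every Eulerian subgraph C of the flip graph G_X. -/

import Mathlib

open Finset

section Simplicial

variable {V : Type*} [DecidableEq V]

/-- `X` is a finite abstract simplicial complex: a finite family of nonempty finite sets
closed under taking nonempty subsets. -/
def IsComplex (X : Finset (Finset V)) : Prop :=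
  (∀ σ ∈ X, σ.Nonempty) ∧ ∀ σ ∈ X, ∀ τ ⊆ σ, τ.Nonempty → τ ∈ X

/-- The `k`-dimensional faces of `X` (faces of cardinality `k+1`). -/
def faces (X : Finset (Finset V)) (k : ℕ) : Finset (Finset V) :=
  X.filter fun σ => σ.card = k + 1

/-- The support of a `k`-cochain. -/
def csupp (X : Finset (Finset V)) (k : ℕ) (φ : Finset V → ZMod 2) : Finset (Finset V) :=
  (faces X k).filter fun σ => φ σ ≠ 0

/-- The norm of a `k`-cochain. -/
def cnorm (X : Finset (Finset V)) (k : ℕ) (φ : Finset V → ZMod 2) : ℕ :=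
  (csupp X k φ).card

/-- The coboundary of a `k`-cochain, as a `(k+1)`-cochain. -/
def cob (X : Finset (Finset V)) (k : ℕ) (φ : Finset V → ZMod 2) : Finset V → ZMod 2 :=
  fun τ => ∑ σ ∈ (faces X k).filter (fun σ => σ ⊆ τ), φ σ

/-- The cosystolic norm of a `k`-cochain, with the reduced convention at `k = 0`. -/
noncomputable def cosys (X : Finset (Finset V)) (k : ℕ) (φ : Finset V → ZMod 2) : ℕ :=
  if k = 0 then
    min (cnorm X 0 φ) (cnorm X 0 fun σ => 1 + φ σ)
  else
    sInf {m | ∃ ψ : Finset V → ZMod 2, m = cnorm X k fun τ => φ τ + cob X (k - 1) ψ τ}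

/-- The `k`-th (coboundary) Cheeger constant, valued in `ℝ≥0∞` (`⊤` if no cochain has
positive cosystolic norm). -/
noncomputable def cheeger (X : Finset (Finset V)) (k : ℕ) : ENNReal :=
  sInf {r : ENNReal | ∃ φ : Finset V → ZMod 2, 0 < cosys X k φ ∧
    r = (cnorm X (k + 1) (cob X k φ) : ENNReal) / (cosys X k φ : ENNReal)}

/-- The boundary of a `k`-chain, as a `(k-1)`-chain. -/
def bdry (X : Finset (Finset V)) (k : ℕ) (c : Finset V → ZMod 2) : Finset V → ZMod 2 :=
  fun τ => ∑ σ ∈ (faces X k).filter (fun σ => τ ⊆ σ), c σ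

/-- A `k`-cycle, with the reduced convention at `k = 0`. -/
def IsCycle (X : Finset (Finset V)) (k : ℕ) (c : Finset V → ZMod 2) : Prop :=
  if k = 0 then ∑ σ ∈ faces X 0, c σ = 0
  else ∀ τ ∈ faces X (k - 1), bdry X k c τ = 0

/-- Evaluation of a `k`-cochain on a `k`-chain. -/
def eval (X : Finset (Finset V)) (k : ℕ) (φ c : Finset V → ZMod 2) : ZMod 2 :=
  ∑ σ ∈ faces X k, φ σ * c σ

end Simplicial

/-- The flip graph of an `n`-dimensional complex: vertices are the `n`-faces, two being
adjacent when they share a common `(n-1)`-face. -/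
def flipGraph {V : Type*} [DecidableEq V] (X : Finset (Finset V)) (n : ℕ) :
    SimpleGraph {σ : Finset V // σ ∈ faces X n} where
  Adj σ τ := σ ≠ τ ∧ (σ.1 ∩ τ.1).card = n
  symm := by
    constructor
    rintro σ τ ⟨hne, h⟩
    exact ⟨hne.symm, by rwa [Finset.inter_comm]⟩
  loopless := by constructor; rintro σ ⟨hne, -⟩; exact hne rfl

/-- The predicate on edges of the flip graph saying that the common `(n-1)`-face of the
two endpoints lies in the support of `φ` (membership in `E_φ`). -/
def edgeInSupp {V : Type*} [DecidableEq V] (X : Finset (Finset V)) (n : ℕ)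
    (φ : Finset V → ZMod 2) : Sym2 {σ : Finset V // σ ∈ faces X n} → Prop :=
  Sym2.lift ⟨fun a b => φ (a.1 ∩ b.1) ≠ 0, fun a b => by simp only [Finset.inter_comm]⟩

/-- `X` is an `n`-pseudomanifold: a pure `n`-dimensional finite complex in which every
`(n-1)`-face lies in exactly two `n`-faces, and whose flip graph is connected. -/
def IsPseudomanifold {V : Type*} [DecidableEq V] (X : Finset (Finset V)) (n : ℕ) : Prop :=
  IsComplex X ∧ (∀ σ ∈ X, ∃ τ ∈ faces X n, σ ⊆ τ) ∧
    (∀ τ ∈ faces X (n - 1), ((faces X n).filter fun σ => τ ⊆ σ).card = 2) ∧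
    (flipGraph X n).Connected

section Aux

open scoped Classical

set_option linter.unusedSectionVars false

variable {V : Type*} [DecidableEq V] {n : ℕ} {X : Finset (Finset V)}

lemma mem_faces_iff {σ : Finset V} {k : ℕ} : σ ∈ faces X k ↔ σ ∈ X ∧ σ.card = k + 1 :=
  Finset.mem_filter

lemma subface_mem (hcx : IsComplex X) (hn : 2 ≤ n) {a σ : Finset V}
    (ha : a ∈ faces X n) (hs : σ ⊆ a) (hcard : σ.card = n) : σ ∈ faces X (n - 1) := by
  rw [mem_faces_iff] at ha ⊢
  refine ⟨hcx.2 a ha.1 σ hs ?_, by omega⟩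
  rw [← Finset.card_pos, hcard]; omega

lemma inter_eq_face (hn : 2 ≤ n) {τ a b : Finset V} (hτ : τ ∈ faces X (n - 1))
    (ha : a ∈ faces X n) (hb : b ∈ faces X n) (hτa : τ ⊆ a) (hτb : τ ⊆ b) (hab : a ≠ b) :
    a ∩ b = τ := by
  have hca := (mem_faces_iff.1 ha).2
  have hcb := (mem_faces_iff.1 hb).2
  have hcτ := (mem_faces_iff.1 hτ).2
  have hsub : τ ⊆ a ∩ b := Finset.subset_inter hτa hτb
  have h1 : a ∩ b ≠ a := by
    intro h
    exact hab (Finset.eq_of_subset_of_card_le (Finset.inter_eq_left.mp h) (by omega))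
  have h2 : a ∩ b ⊆ a := Finset.inter_subset_left
  have h3 : (a ∩ b).card < a.card := Finset.card_lt_card (ssubset_of_subset_of_ne h2 h1)
  exact (Finset.eq_of_subset_of_card_le hsub (by omega)).symm

lemma eq_or_eq_of_subset (htwo : ∀ τ ∈ faces X (n - 1),
      ((faces X n).filter fun σ => τ ⊆ σ).card = 2)
    {τ a b c : Finset V} (hτ : τ ∈ faces X (n - 1))
    (ha : a ∈ faces X n) (hb : b ∈ faces X n) (hc : c ∈ faces X n)
    (hτa : τ ⊆ a) (hτb : τ ⊆ b) (hτc : τ ⊆ c) (hab : a ≠ b) : c = a ∨ c = b := by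
  have h2 := htwo τ hτ
  obtain ⟨x, y, hxy, hs⟩ := Finset.card_eq_two.mp h2
  have hma : a ∈ (faces X n).filter fun σ => τ ⊆ σ := Finset.mem_filter.2 ⟨ha, hτa⟩
  have hmb : b ∈ (faces X n).filter fun σ => τ ⊆ σ := Finset.mem_filter.2 ⟨hb, hτb⟩
  have hmc : c ∈ (faces X n).filter fun σ => τ ⊆ σ := Finset.mem_filter.2 ⟨hc, hτc⟩
  rw [hs] at hma hmb hmc
  simp only [Finset.mem_insert, Finset.mem_singleton] at hma hmb hmc
  rcases hma with rfl | rfl <;> rcases hmb with rfl | rfl <;>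
    rcases hmc with rfl | rfl <;> tauto

lemma exists_other (htwo : ∀ τ ∈ faces X (n - 1),
      ((faces X n).filter fun σ => τ ⊆ σ).card = 2)
    {τ a : Finset V} (hτ : τ ∈ faces X (n - 1)) :
    ∃ b ∈ faces X n, τ ⊆ b ∧ b ≠ a := by
  have h2 := htwo τ hτ
  obtain ⟨b, hb, hba⟩ :=
    Finset.exists_mem_ne (s := (faces X n).filter fun σ => τ ⊆ σ) (by omega) a
  rw [Finset.mem_filter] at hb
  exact ⟨b, hb.1, hb.2, hba⟩

lemma adj_inter_mem (hcx : IsComplex X) (hn : 2 ≤ n)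
    {a b : {σ : Finset V // σ ∈ faces X n}} (h : (flipGraph X n).Adj a b) :
    a.1 ∩ b.1 ∈ faces X (n - 1) :=
  subface_mem hcx hn a.2 Finset.inter_subset_left h.2

lemma adj_of_shared (hn : 2 ≤ n) {τ : Finset V} (hτ : τ ∈ faces X (n - 1))
    {a b : {σ : Finset V // σ ∈ faces X n}}
    (hτa : τ ⊆ a.1) (hτb : τ ⊆ b.1) (hab : a ≠ b) : (flipGraph X n).Adj a b := by
  refine ⟨hab, ?_⟩
  have hne : a.1 ≠ b.1 := fun h => hab (Subtype.ext h)
  rw [inter_eq_face hn hτ a.2 b.2 hτa hτb hne]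
  have := (mem_faces_iff.1 hτ).2; omega

/-- The common face of the two endpoints of an edge of the flip graph. -/
def faceOf (X : Finset (Finset V)) (n : ℕ) : Sym2 {σ : Finset V // σ ∈ faces X n} → Finset V :=
  Sym2.lift ⟨fun a b => a.1 ∩ b.1, fun a b => Finset.inter_comm a.1 b.1⟩

lemma countEdges (hcx : IsComplex X) (hn : 2 ≤ n)
    (htwo : ∀ τ ∈ faces X (n - 1), ((faces X n).filter fun σ => τ ⊆ σ).card = 2)
    {C : SimpleGraph {σ : Finset V // σ ∈ faces X n}} (hC : C ≤ flipGraph X n)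
    (Q : Finset V → Prop) :
    {e | e ∈ C.edgeSet ∧ Q (faceOf X n e)}.ncard =
      ((faces X (n - 1)).filter fun σ =>
        (∃ a b, C.Adj a b ∧ a.1 ∩ b.1 = σ) ∧ Q σ).card := by
  classical
  set S : Set (Sym2 {σ : Finset V // σ ∈ faces X n}) :=
    {e | e ∈ C.edgeSet ∧ Q (faceOf X n e)} with hS
  have hinj : Set.InjOn (faceOf X n) S := by
    rintro e₁ he₁ e₂ he₂ h
    induction e₁ using Sym2.ind with
    | _ a b =>
      induction e₂ using Sym2.ind with
      | _ c d =>
        have hab : C.Adj a b := he₁.1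
        have hcd : C.Adj c d := he₂.1
        have hGab := hC hab
        have hGcd := hC hcd
        have hτ : a.1 ∩ b.1 ∈ faces X (n - 1) := adj_inter_mem hcx hn hGab
        have hfe : a.1 ∩ b.1 = c.1 ∩ d.1 := h
        have hca : a.1 ∩ b.1 ⊆ c.1 := hfe ▸ Finset.inter_subset_left
        have hda : a.1 ∩ b.1 ⊆ d.1 := hfe ▸ Finset.inter_subset_right
        have habne : a.1 ≠ b.1 := fun hh => hGab.1 (Subtype.ext hh)
        have hc' := eq_or_eq_of_subset htwo hτ a.2 b.2 c.2
          Finset.inter_subset_left Finset.inter_subset_right hca habne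
        have hd' := eq_or_eq_of_subset htwo hτ a.2 b.2 d.2
          Finset.inter_subset_left Finset.inter_subset_right hda habne
        have hcdne : c.1 ≠ d.1 := fun hh => hGcd.1 (Subtype.ext hh)
        rcases hc' with hc1 | hc1 <;> rcases hd' with hd1 | hd1
        · exact absurd (hc1.trans hd1.symm) hcdne
        · rw [Sym2.eq_iff]; left; exact ⟨(Subtype.ext hc1).symm, (Subtype.ext hd1).symm⟩
        · rw [Sym2.eq_iff]; right; exact ⟨(Subtype.ext hd1).symm, (Subtype.ext hc1).symm⟩
        · exact absurd (hc1.trans hd1.symm) hcdne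
  have himg : faceOf X n '' S = ((faces X (n - 1)).filter fun σ =>
      (∃ a b, C.Adj a b ∧ a.1 ∩ b.1 = σ) ∧ Q σ : Finset (Finset V)) := by
    ext σ
    simp only [Set.mem_image, Finset.coe_filter, Set.mem_setOf_eq, Finset.mem_filter]
    constructor
    · rintro ⟨e, he, rfl⟩
      induction e using Sym2.ind with
      | _ a b =>
        exact ⟨adj_inter_mem hcx hn (hC he.1), ⟨a, b, he.1, rfl⟩, he.2⟩
    · rintro ⟨hσ, ⟨a, b, hab, rfl⟩, hQ⟩
      exact ⟨s(a, b), ⟨hab, hQ⟩, rfl⟩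
  calc S.ncard = (faceOf X n '' S).ncard := (Set.ncard_image_of_injOn hinj).symm
    _ = _ := by rw [himg, Set.ncard_coe_finset]

lemma countDeg (hcx : IsComplex X) (hn : 2 ≤ n)
    (htwo : ∀ τ ∈ faces X (n - 1), ((faces X n).filter fun σ => τ ⊆ σ).card = 2)
    {C : SimpleGraph {σ : Finset V // σ ∈ faces X n}} (hC : C ≤ flipGraph X n)
    (v : {σ : Finset V // σ ∈ faces X n}) :
    (C.neighborSet v).ncard =
      ((faces X (n - 1)).filter fun σ =>
        σ ⊆ v.1 ∧ ∃ w, C.Adj v w ∧ v.1 ∩ w.1 = σ).card := by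
  classical
  have hinj : Set.InjOn (fun w : {σ : Finset V // σ ∈ faces X n} => v.1 ∩ w.1)
      (C.neighborSet v) := by
    intro w hw w' hw' h
    simp only at h
    have hGw := hC hw
    have hGw' := hC hw'
    have hτ : v.1 ∩ w.1 ∈ faces X (n - 1) := adj_inter_mem hcx hn hGw
    have hvne : v.1 ≠ w.1 := fun hh => hGw.1 (Subtype.ext hh)
    have := eq_or_eq_of_subset htwo hτ v.2 w.2 w'.2
      Finset.inter_subset_left Finset.inter_subset_right
      (h ▸ Finset.inter_subset_right) hvne
    rcases this with h1 | h1
    · exact absurd (Subtype.ext h1).symm (SimpleGraph.ne_of_adj C hw')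
    · exact (Subtype.ext h1).symm
  have himg : (fun w : {σ : Finset V // σ ∈ faces X n} => v.1 ∩ w.1) '' (C.neighborSet v)
      = ((faces X (n - 1)).filter fun σ =>
        σ ⊆ v.1 ∧ ∃ w, C.Adj v w ∧ v.1 ∩ w.1 = σ : Finset (Finset V)) := by
    ext σ
    simp only [Set.mem_image, SimpleGraph.mem_neighborSet, Finset.coe_filter,
      Set.mem_setOf_eq]
    constructor
    · rintro ⟨w, hw, rfl⟩
      exact ⟨adj_inter_mem hcx hn (hC hw), Finset.inter_subset_left, w, hw, rfl⟩
    · rintro ⟨hσ, hsub, w, hw, rfl⟩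
      exact ⟨w, hw, rfl⟩
  calc (C.neighborSet v).ncard
      = ((fun w : {σ : Finset V // σ ∈ faces X n} => v.1 ∩ w.1) '' (C.neighborSet v)).ncard :=
        (Set.ncard_image_of_injOn hinj).symm
    _ = _ := by rw [himg, Set.ncard_coe_finset]

lemma cob_eq_card (z : Finset V → ZMod 2) (v : Finset V) :
    cob X (n - 1) z v =
      (((faces X (n - 1)).filter fun σ => σ ⊆ v ∧ z σ ≠ 0).card : ZMod 2) := by
  classical
  have h01 : ∀ x : ZMod 2, x = if x ≠ 0 then 1 else 0 := by decide
  calc cob X (n - 1) z v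
      = ∑ σ ∈ (faces X (n - 1)).filter (fun σ => σ ⊆ v), (if z σ ≠ 0 then 1 else 0) :=
        Finset.sum_congr rfl fun σ _ => h01 (z σ)
    _ = ((((faces X (n - 1)).filter fun σ => σ ⊆ v).filter fun σ => z σ ≠ 0).card : ZMod 2) :=
        Finset.sum_boole _ _
    _ = _ := by rw [Finset.filter_filter]

lemma cnorm_add_two_mul_inter (φ z : Finset V → ZMod 2) (k : ℕ) :
    cnorm X k (fun τ => φ τ + z τ) + 2 * ((csupp X k φ) ∩ (csupp X k z)).card
      = cnorm X k φ + cnorm X k z := by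
  classical
  have hxor : ∀ a b : ZMod 2, (a + b ≠ 0 ↔ ((a ≠ 0) ↔ ¬(b ≠ 0))) := by decide
  have hset : csupp X k (fun τ => φ τ + z τ) =
      ((csupp X k φ) ∪ (csupp X k z)) \ ((csupp X k φ) ∩ (csupp X k z)) := by
    ext σ
    simp only [csupp, Finset.mem_filter, Finset.mem_sdiff, Finset.mem_union,
      Finset.mem_inter]
    have := hxor (φ σ) (z σ)
    tauto
  have hsub : (csupp X k φ) ∩ (csupp X k z) ⊆ (csupp X k φ) ∪ (csupp X k z) :=
    Finset.inter_subset_union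
  have h1 := Finset.card_sdiff_add_card_eq_card hsub
  have h2 := Finset.card_union_add_card_inter (csupp X k φ) (csupp X k z)
  unfold cnorm
  rw [hset]
  omega

lemma cob_cob_eq_zero (hcx : IsComplex X) (hn : 2 ≤ n) (ψ : Finset V → ZMod 2)
    {τ : Finset V} (hτ : τ ∈ faces X n) :
    cob X (n - 1) (cob X (n - 2) ψ) τ = 0 := by
  classical
  have hcτ := (mem_faces_iff.1 hτ).2
  unfold cob
  rw [Finset.sum_congr rfl fun σ _ =>
    (Finset.sum_filter (fun ρ => ρ ⊆ σ) ψ : _)]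
  rw [Finset.sum_comm]
  refine Finset.sum_eq_zero fun ρ hρ => ?_
  have hcρ := (mem_faces_iff.1 hρ).2
  rw [← Finset.sum_filter]
  by_cases hρτ : ρ ⊆ τ
  · -- the number of faces σ with ρ ⊆ σ ⊆ τ, σ ∈ faces X (n-1), is 2
    have himg : (((faces X (n - 1)).filter fun σ => σ ⊆ τ).filter fun σ => ρ ⊆ σ)
        = (τ \ ρ).image (fun y => insert y ρ) := by
      ext σ
      simp only [Finset.mem_filter, Finset.mem_image, Finset.mem_sdiff]
      constructor
      · rintro ⟨⟨hσf, hστ⟩, hρσ⟩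
        have hcσ := (mem_faces_iff.1 hσf).2
        have hd : (σ \ ρ).card = 1 := by rw [Finset.card_sdiff_of_subset hρσ]; omega
        obtain ⟨y, hy⟩ := Finset.card_eq_one.mp hd
        have hyσ : y ∈ σ \ ρ := hy ▸ Finset.mem_singleton_self y
        refine ⟨y, ⟨hστ (Finset.mem_sdiff.1 hyσ).1, (Finset.mem_sdiff.1 hyσ).2⟩, ?_⟩
        have := Finset.sdiff_union_of_subset hρσ
        rw [hy] at this
        rw [Finset.insert_eq]; exact this
      · rintro ⟨y, ⟨hyτ, hyρ⟩, rfl⟩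
        have hcard : (insert y ρ).card = n := by
          rw [Finset.card_insert_of_notMem hyρ]; omega
        have hsubτ : insert y ρ ⊆ τ := Finset.insert_subset hyτ hρτ
        exact ⟨⟨subface_mem hcx hn hτ hsubτ hcard, hsubτ⟩, Finset.subset_insert y ρ⟩
    have hinj : Set.InjOn (fun y => insert y ρ) (τ \ ρ : Finset V) := by
      intro y hy y' hy' h
      have hyρ : y ∉ ρ := (Finset.mem_sdiff.1 hy).2
      have h' : insert y ρ = insert y' ρ := h
      have : y ∈ insert y' ρ := h' ▸ Finset.mem_insert_self y ρ
      rcases Finset.mem_insert.1 this with h' | h'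
      · exact h'
      · exact absurd h' hyρ
    have hcard2 : (τ \ ρ).card = 2 := by rw [Finset.card_sdiff_of_subset hρτ]; omega
    rw [himg, Finset.sum_image (fun y hy y' hy' h => hinj hy hy' h)]
    rw [Finset.sum_const, hcard2, CharTwo.two_nsmul]
  · have hempty : (((faces X (n - 1)).filter fun σ => σ ⊆ τ).filter fun σ => ρ ⊆ σ) = ∅ := by
      rw [Finset.filter_eq_empty_iff]
      rintro σ hσ hρσ
      exact hρτ (hρσ.trans (Finset.mem_filter.1 hσ).2)
    rw [hempty, Finset.sum_empty]

lemma cosys_eq_sInf (hn : 2 ≤ n) (φ : Finset V → ZMod 2) :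
    cosys X (n - 1) φ =
      sInf {m | ∃ ψ : Finset V → ZMod 2,
        m = cnorm X (n - 1) fun τ => φ τ + cob X (n - 2) ψ τ} := by
  unfold cosys
  rw [if_neg (by omega : ¬ n - 1 = 0)]
  have e : n - 1 - 1 = n - 2 := by omega
  rw [e]

lemma cnorm_mem_sInfSet (hn : 2 ≤ n) (φ : Finset V → ZMod 2) :
    cnorm X (n - 1) φ ∈ {m | ∃ ψ : Finset V → ZMod 2,
      m = cnorm X (n - 1) fun τ => φ τ + cob X (n - 2) ψ τ} := by
  refine ⟨fun _ => 0, ?_⟩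
  have : (fun τ => φ τ + cob X (n - 2) (fun _ => 0) τ) = φ := by
    funext τ; simp [cob]
  rw [this]

end Aux

/-- **Combinatorial characterization of codimension-one cosystoles of pseudomanifolds**:
for an `n`-pseudomanifold `X` with `H^{n-1}(X; ℤ/2) = 0`, an `(n-1)`-cochain `φ` is a
cosystole iff `2|E(C) ∩ E_φ| ≤ |E(C)|` for every Eulerian subgraph `C` of the flip
graph. -/
theorem pseudomanifold_cosystole_iff {V : Type*} [DecidableEq V] [Fintype V]
    (n : ℕ) (hn : 2 ≤ n) (X : Finset (Finset V))
    (hpm : IsPseudomanifold X n)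
    (hcoh : ∀ φ : Finset V → ZMod 2,
      (∀ τ ∈ faces X n, cob X (n - 1) φ τ = 0) →
      ∃ ψ : Finset V → ZMod 2, ∀ σ ∈ faces X (n - 1), φ σ = cob X (n - 2) ψ σ)
    (φ : Finset V → ZMod 2) :
    cnorm X (n - 1) φ = cosys X (n - 1) φ ↔
      ∀ C : SimpleGraph {σ : Finset V // σ ∈ faces X n}, C ≤ flipGraph X n →
        (∀ v, Even ((C.neighborSet v).ncard)) →
        2 * (C.edgeSet ∩ {e | edgeInSupp X n φ e}).ncard ≤ C.edgeSet.ncard := by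
  classical
  obtain ⟨hcx, hpure, htwo, -⟩ := hpm
  have bridge : ∀ (z : Finset V → ZMod 2) (C : SimpleGraph {σ : Finset V // σ ∈ faces X n}),
      C ≤ flipGraph X n →
      (∀ σ ∈ faces X (n - 1), (z σ ≠ 0 ↔ ∃ a b, C.Adj a b ∧ a.1 ∩ b.1 = σ)) →
      (csupp X (n - 1) z).card = C.edgeSet.ncard ∧
      (csupp X (n - 1) φ ∩ csupp X (n - 1) z).card
          = (C.edgeSet ∩ {e | edgeInSupp X n φ e}).ncard ∧
      ∀ v : {σ : Finset V // σ ∈ faces X n},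
        (cob X (n - 1) z v.1 = 0 ↔ Even ((C.neighborSet v).ncard)) := by
    intro z C hC hmatch
    refine ⟨?_, ?_, ?_⟩
    · have h1 := countEdges hcx hn htwo hC (fun _ => True)
      have hs : {e | e ∈ C.edgeSet ∧ True} = C.edgeSet := by ext e; simp
      rw [hs] at h1
      rw [h1]
      refine congrArg Finset.card ?_
      ext σ
      simp only [csupp, Finset.mem_filter, and_true]
      exact and_congr_right fun hσ => hmatch σ hσ
    · have h2 := countEdges hcx hn htwo hC (fun σ => φ σ ≠ 0)
      have hs : {e | e ∈ C.edgeSet ∧ φ (faceOf X n e) ≠ 0}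
          = C.edgeSet ∩ {e | edgeInSupp X n φ e} := by
        ext e
        induction e using Sym2.ind with
        | _ a b =>
          simp only [Set.mem_setOf_eq, Set.mem_inter_iff, SimpleGraph.mem_edgeSet]
          exact Iff.rfl
      rw [hs] at h2
      rw [h2]
      refine congrArg Finset.card ?_
      ext σ
      simp only [csupp, Finset.mem_inter, Finset.mem_filter]
      constructor
      · rintro ⟨⟨hσ, hφ⟩, -, hzσ⟩
        exact ⟨hσ, (hmatch σ hσ).1 hzσ, hφ⟩
      · rintro ⟨hσ, hex, hφ⟩
        exact ⟨⟨hσ, hφ⟩, hσ, (hmatch σ hσ).2 hex⟩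
    · intro v
      rw [cob_eq_card (X := X) z v.1, countDeg hcx hn htwo hC v]
      have hfil : ((faces X (n - 1)).filter fun σ => σ ⊆ v.1 ∧ z σ ≠ 0)
          = ((faces X (n - 1)).filter fun σ =>
              σ ⊆ v.1 ∧ ∃ w, C.Adj v w ∧ v.1 ∩ w.1 = σ) := by
        refine Finset.filter_congr fun σ hσ => ?_
        refine and_congr_right fun hσv => ?_
        rw [hmatch σ hσ]
        constructor
        · rintro ⟨a, b, hab, rfl⟩
          have hGab := hC hab
          have habne : a.1 ≠ b.1 := fun hh => hGab.1 (Subtype.ext hh)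
          have hmem := eq_or_eq_of_subset htwo hσ a.2 b.2 v.2
            Finset.inter_subset_left Finset.inter_subset_right hσv habne
          rcases hmem with h1 | h1
          · have hva : v = a := Subtype.ext h1
            exact ⟨b, by rw [hva]; exact hab, by rw [hva]⟩
          · have hvb : v = b := Subtype.ext h1
            exact ⟨a, by rw [hvb]; exact hab.symm, by rw [hvb, Finset.inter_comm]⟩
        · rintro ⟨w, hw, hww⟩
          exact ⟨v, w, hw, hww⟩
      rw [hfil, ZMod.natCast_eq_zero_iff]
      exact even_iff_two_dvd.symm
  rw [cosys_eq_sInf hn φ]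
  set S := {m | ∃ ψ : Finset V → ZMod 2,
    m = cnorm X (n - 1) fun τ => φ τ + cob X (n - 2) ψ τ} with hS
  constructor
  · intro hEq C hC hEuler
    set z : Finset V → ZMod 2 := fun σ =>
      if (σ ∈ faces X (n - 1) ∧ ∃ a b, C.Adj a b ∧ a.1 ∩ b.1 = σ) then 1 else 0 with hzdef
    have hmatch : ∀ σ ∈ faces X (n - 1), (z σ ≠ 0 ↔ ∃ a b, C.Adj a b ∧ a.1 ∩ b.1 = σ) := by
      intro σ hσ
      constructor
      · intro hz
        by_contra hex
        apply hz
        simp only [hzdef]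
        exact if_neg fun hc => hex hc.2
      · intro hex
        simp only [hzdef]
        rw [if_pos ⟨hσ, hex⟩]
        decide
    obtain ⟨hcount, hcount2, hparity⟩ := bridge z C hC hmatch
    have hcoc : ∀ τ ∈ faces X n, cob X (n - 1) z τ = 0 := fun τ hτ =>
      (hparity ⟨τ, hτ⟩).mpr (hEuler ⟨τ, hτ⟩)
    obtain ⟨ψ, hψ⟩ := hcoh z hcoc
    have hmem : cnorm X (n - 1) (fun τ => φ τ + z τ) ∈ S := by
      refine ⟨ψ, ?_⟩
      refine congrArg Finset.card ?_
      unfold csupp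
      refine Finset.filter_congr fun σ hσ => ?_
      show φ σ + z σ ≠ 0 ↔ φ σ + cob X (n - 2) ψ σ ≠ 0
      rw [hψ σ hσ]
    have hle : cnorm X (n - 1) φ ≤ cnorm X (n - 1) (fun τ => φ τ + z τ) :=
      le_of_eq_of_le hEq (Nat.sInf_le hmem)
    have hkey := cnorm_add_two_mul_inter (X := X) φ z (n - 1)
    have hz2 : cnorm X (n - 1) z = (csupp X (n - 1) z).card := rfl
    rw [← hcount, ← hcount2]
    omega
  · intro h
    refine le_antisymm ?_ (Nat.sInf_le (cnorm_mem_sInfSet hn φ))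
    obtain ⟨ψ, hψeq⟩ :=
      Nat.sInf_mem (s := S) ⟨cnorm X (n - 1) φ, cnorm_mem_sInfSet hn φ⟩
    rw [hψeq]
    set z : Finset V → ZMod 2 := cob X (n - 2) ψ with hzdef
    let C : SimpleGraph {σ : Finset V // σ ∈ faces X n} :=
      { Adj := fun a b => (flipGraph X n).Adj a b ∧ z (a.1 ∩ b.1) ≠ 0
        symm := by constructor; rintro a b ⟨h1, h2⟩; exact ⟨h1.symm, by rwa [Finset.inter_comm]⟩
        loopless := ⟨fun a ha => (flipGraph X n).loopless.irrefl a ha.1⟩ }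
    have hCadj : ∀ a b, C.Adj a b ↔
        ((flipGraph X n).Adj a b ∧ z (a.1 ∩ b.1) ≠ 0) := fun a b => Iff.rfl
    have hC : C ≤ flipGraph X n := fun a b hab => ((hCadj a b).1 hab).1
    have hmatch : ∀ σ ∈ faces X (n - 1), (z σ ≠ 0 ↔ ∃ a b, C.Adj a b ∧ a.1 ∩ b.1 = σ) := by
      intro σ hσ
      constructor
      · intro hz
        obtain ⟨hσX, -⟩ := mem_faces_iff.1 hσ
        obtain ⟨τ₀, hτ₀, hστ₀⟩ := hpure σ hσX
        obtain ⟨b, hb, hσb, hba⟩ := exists_other htwo hσ (a := τ₀)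
        have hadj : (flipGraph X n).Adj ⟨τ₀, hτ₀⟩ ⟨b, hb⟩ :=
          adj_of_shared hn hσ hστ₀ hσb (fun hh => hba (congrArg Subtype.val hh).symm)
        have hint : τ₀ ∩ b = σ := inter_eq_face hn hσ hτ₀ hb hστ₀ hσb
          (fun hh => hba hh.symm)
        refine ⟨⟨τ₀, hτ₀⟩, ⟨b, hb⟩, (hCadj _ _).2 ⟨hadj, ?_⟩, hint⟩
        show z (τ₀ ∩ b) ≠ 0
        rw [hint]; exact hz
      · rintro ⟨a, b, hab, rfl⟩
        exact ((hCadj a b).1 hab).2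
    obtain ⟨hcount, hcount2, hparity⟩ := bridge z C hC hmatch
    have hEuler : ∀ v, Even ((C.neighborSet v).ncard) := fun v =>
      (hparity v).mp (cob_cob_eq_zero hcx hn ψ v.2)
    have hineq := h C hC hEuler
    rw [← hcount, ← hcount2] at hineq
    have hkey := cnorm_add_two_mul_inter (X := X) φ z (n - 1)
    have hz2 : cnorm X (n - 1) z = (csupp X (n - 1) z).card := rfl
    show cnorm X (n - 1) φ ≤ cnorm X (n - 1) fun τ => φ τ + z τ
    omega
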